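/- For every n ≥ 1 and every field F, the determinant det Tₙ of the n×n Toeplitz matrix of indeterminates is irreducible in the polynomial ring F[x_{1−n}, …, x_{n−1}]. -/

import Mathlib

open MvPolynomial

section ToeplitzAux

variable {F : Type*} [Field F]

/-- Irreducibility descends along an injective `rename`. -/
theorem toeplitz_irr_of_rename {σ τ : Type*} {f : σ → τ} (hf : Function.Injective f)
    {p : MvPolynomial σ F} (h : Irreducible (rename f p)) : Irreducible p := by
  constructor
  · exact fun hu => h.not_isUnit (hu.map (rename f))
  · intro a b hab
    have h2 : IsUnit (rename f a) ∨ IsUnit (rename f b) :=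
      h.isUnit_or_isUnit (by rw [hab, map_mul])
    refine h2.imp (fun hu => ?_) (fun hu => ?_) <;>
    · have := hu.map (killCompl hf)
      rwa [killCompl_rename_app] at this

/-- Irreducibility descends along a ring equivalence. -/
theorem toeplitz_irr_of_ringEquiv {R S : Type*} [CommRing R] [CommRing S] (e : R ≃+* S)
    {p : R} (h : Irreducible (e p)) : Irreducible p := by
  constructor
  · exact fun hu => h.not_isUnit (hu.map e)
  · intro a b hab
    have h2 : IsUnit (e a) ∨ IsUnit (e b) :=
      h.isUnit_or_isUnit (by rw [hab, map_mul])
    refine h2.imp (fun hu => ?_) (fun hu => ?_) <;>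
    · have := hu.map e.symm
      simpa using this

/-- A linear polynomial `M • X + B` with `M` irreducible not dividing `B` is irreducible. -/
theorem toeplitz_irr_linear {S : Type*} [CommRing S] [IsDomain S] {M B : S}
    (hM : Irreducible M) (hndvd : ¬ M ∣ B) :
    Irreducible (Polynomial.C M * Polynomial.X + Polynomial.C B) := by
  have hM0 : M ≠ 0 := hM.ne_zero
  have hdeg : (Polynomial.C M * Polynomial.X + Polynomial.C B).natDegree = 1 :=
    Polynomial.natDegree_linear hM0
  set f := Polynomial.C M * Polynomial.X + Polynomial.C B with hf
  have hf0 : f ≠ 0 := fun h => by simp [h] at hdeg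
  have key : ∀ a b : Polynomial S, f = a * b → b.natDegree = 0 → IsUnit b := by
    intro a b hab hb0
    obtain ⟨c, rfl⟩ := Polynomial.natDegree_eq_zero.mp hb0
    have hc1 : M = a.coeff 1 * c := by
      have := congrArg (fun p => Polynomial.coeff p 1) hab
      simpa [hf, Polynomial.coeff_C, Polynomial.coeff_mul_C] using this
    have hc0 : B = a.coeff 0 * c := by
      have := congrArg (fun p => Polynomial.coeff p 0) hab
      simpa [hf, Polynomial.coeff_C, Polynomial.coeff_mul_C] using this
    have hcM : c ∣ M := ⟨a.coeff 1, by rw [hc1, mul_comm]⟩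
    have hcB : c ∣ B := ⟨a.coeff 0, by rw [hc0, mul_comm]⟩
    obtain ⟨d, hd⟩ := hcM
    rcases hM.isUnit_or_isUnit hd with hu | hu
    · exact Polynomial.isUnit_C.mpr hu
    · exfalso
      obtain ⟨u, rfl⟩ := hu
      have hMc : M ∣ c := ⟨(u⁻¹ : Sˣ), by rw [hd]; simp [mul_assoc]⟩
      exact hndvd (hMc.trans hcB)
  constructor
  · intro hu
    have := Polynomial.natDegree_eq_zero_of_isUnit hu
    omega
  · intro a b hab
    have ha0 : a ≠ 0 := fun h => hf0 (by simp [hab, h])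
    have hb0 : b ≠ 0 := fun h => hf0 (by simp [hab, h])
    have hsum : a.natDegree + b.natDegree = 1 := by
      rw [← Polynomial.natDegree_mul ha0 hb0, ← hab, hdeg]
    rcases Nat.eq_zero_or_pos b.natDegree with h | h
    · exact Or.inr (key a b hab h)
    · exact Or.inl (key b a (by rw [hab, mul_comm]) (by omega))

/-- The algebra equivalence isolating the variable `c`. -/
noncomputable def toeplitzIsolate (F : Type*) [Field F] (c : ℤ) :
    MvPolynomial ℤ F ≃ₐ[F] Polynomial (MvPolynomial {z : ℤ // z ≠ c} F) :=
  (renameEquiv F (Equiv.optionSubtypeNe c).symm).trans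
    (optionEquivLeft F {z : ℤ // z ≠ c})

theorem toeplitzIsolate_X_self (c : ℤ) :
    toeplitzIsolate F c (X c) = Polynomial.X := by
  simp [toeplitzIsolate, renameEquiv_apply, rename_X, Equiv.optionSubtypeNe_symm_self,
    optionEquivLeft_X_none]

theorem toeplitzIsolate_rename (c : ℤ) (q : MvPolynomial {z : ℤ // z ≠ c} F) :
    toeplitzIsolate F c (rename Subtype.val q) = Polynomial.C q := by
  simp only [toeplitzIsolate, AlgEquiv.trans_apply, renameEquiv_apply]
  rw [rename_rename]
  have hcomp : ((Equiv.optionSubtypeNe c).symm ∘ Subtype.val :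
      {z : ℤ // z ≠ c} → Option {z : ℤ // z ≠ c}) = some := by
    funext s
    simp [Function.comp, Equiv.optionSubtypeNe_symm_of_ne s.prop]
  rw [hcomp]
  induction q using MvPolynomial.induction_on with
  | C r => simp [optionEquivLeft_C]
  | add p q hp hq => simp [map_add, hp, hq]
  | mul_X p s hp => simp [map_mul, hp, optionEquivLeft_X_some]

/-- The generic Toeplitz determinant, with variables indexed by `ℤ`. -/
noncomputable def toeplitzGdet (F : Type*) [Field F] (n : ℕ) : MvPolynomial ℤ F :=
  Matrix.det (Matrix.of fun i j : Fin n => X ((i : ℤ) - (j : ℤ)))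

/-- The minor matrix: shifted Toeplitz matrix of size `m`. -/
noncomputable def toeplitzMmat (F : Type*) [Field F] (m : ℕ) :
    Matrix (Fin m) (Fin m) (MvPolynomial ℤ F) :=
  Matrix.of fun i j => X ((i : ℤ) - (j : ℤ) - 1)

/-- The Toeplitz matrix with the bottom-left corner entry replaced by `0`. -/
noncomputable def toeplitzBmat (F : Type*) [Field F] (m : ℕ) :
    Matrix (Fin (m+1)) (Fin (m+1)) (MvPolynomial ℤ F) :=
  Matrix.of fun i j => if (i : ℕ) = m ∧ (j : ℕ) = 0 then 0 else X ((i : ℤ) - (j : ℤ))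

noncomputable def toeplitzMmatS (F : Type*) [Field F] (m : ℕ) :
    Matrix (Fin m) (Fin m) (MvPolynomial {z : ℤ // z ≠ (m : ℤ)} F) :=
  Matrix.of fun i j => X ⟨(i : ℤ) - (j : ℤ) - 1, by
    have hi := i.isLt; have hj := j.isLt; omega⟩

noncomputable def toeplitzBmatS (F : Type*) [Field F] (m : ℕ) :
    Matrix (Fin (m+1)) (Fin (m+1)) (MvPolynomial {z : ℤ // z ≠ (m : ℤ)} F) :=
  Matrix.of fun i j => if h : (i : ℕ) = m ∧ (j : ℕ) = 0 then 0
    else X ⟨(i : ℤ) - (j : ℤ), by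
      have hi := i.isLt; have hj := j.isLt; omega⟩

theorem toeplitz_rename_MmatS_det (m : ℕ) :
    rename (Subtype.val : {z : ℤ // z ≠ (m : ℤ)} → ℤ) (toeplitzMmatS F m).det
      = (toeplitzMmat F m).det := by
  rw [AlgHom.map_det]
  congr 1
  apply Matrix.ext
  intro i j
  simp [toeplitzMmatS, toeplitzMmat, AlgHom.mapMatrix_apply, Matrix.map_apply]

theorem toeplitz_rename_BmatS_det (m : ℕ) :
    rename (Subtype.val : {z : ℤ // z ≠ (m : ℤ)} → ℤ) (toeplitzBmatS F m).det
      = (toeplitzBmat F m).det := by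
  rw [AlgHom.map_det]
  congr 1
  apply Matrix.ext
  intro i j
  rw [AlgHom.mapMatrix_apply, Matrix.map_apply, toeplitzBmatS, toeplitzBmat,
    Matrix.of_apply, Matrix.of_apply]
  by_cases h : (i : ℕ) = m ∧ (j : ℕ) = 0
  · rw [dif_pos h, if_pos h, map_zero]
  · rw [dif_neg h, if_neg h, rename_X]

theorem toeplitz_rename_shift_gdet (m : ℕ) :
    rename (⇑(Equiv.subRight (1 : ℤ))) (toeplitzGdet F m) = (toeplitzMmat F m).det := by
  rw [toeplitzGdet, AlgHom.map_det]
  congr 1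
  apply Matrix.ext
  intro i j
  simp [toeplitzMmat, AlgHom.mapMatrix_apply, Matrix.map_apply, Equiv.subRight_apply]

theorem toeplitz_eval_Mmat_det (m : ℕ) (hm : 1 ≤ m) :
    eval (fun z : ℤ => if z = 0 then (1 : F) else 0) (toeplitzMmat F m).det = 0 := by
  rw [RingHom.map_det, RingHom.mapMatrix_apply]
  have htri : ((toeplitzMmat F m).map
      (eval fun z : ℤ => if z = 0 then (1 : F) else 0)).BlockTriangular
      OrderDual.toDual := by
    intro i j hij
    have hij' : i < j := hij
    have : ¬ ((i : ℤ) - (j : ℤ) - 1 = 0) := by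
      have : (i : ℕ) < (j : ℕ) := hij'
      omega
    simp [toeplitzMmat, Matrix.map_apply, this]
  rw [Matrix.det_of_lowerTriangular _ htri]
  refine Finset.prod_eq_zero (Finset.mem_univ (⟨0, hm⟩ : Fin m)) ?_
  simp [toeplitzMmat, Matrix.map_apply]

theorem toeplitz_eval_Bmat_det (m : ℕ) (hm : 1 ≤ m) :
    eval (fun z : ℤ => if z = 0 then (1 : F) else 0) (toeplitzBmat F m).det = 1 := by
  rw [RingHom.map_det, RingHom.mapMatrix_apply]
  have h1 : (toeplitzBmat F m).map (eval fun z : ℤ => if z = 0 then (1 : F) else 0) = 1 := by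
    apply Matrix.ext
    intro i j
    rw [Matrix.map_apply, toeplitzBmat, Matrix.of_apply]
    by_cases h : (i : ℕ) = m ∧ (j : ℕ) = 0
    · have hne : i ≠ j := by
        intro e
        rw [e] at h
        omega
      rw [if_pos h, map_zero, Matrix.one_apply_ne hne]
    · rw [if_neg h, eval_X]
      by_cases hij : i = j
      · subst hij
        simp [Matrix.one_apply_eq]
      · have hv : ¬ ((i : ℤ) - (j : ℤ) = 0) := by
          have : (i : ℕ) ≠ (j : ℕ) := fun e => hij (Fin.ext e)
          omega
        rw [if_neg hv, Matrix.one_apply_ne hij]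
  rw [h1, Matrix.det_one]

theorem toeplitz_gdet_decomp (m : ℕ) (hm : 1 ≤ m) :
    toeplitzGdet F (m+1) =
      X (m : ℤ) * ((-1) ^ m * (toeplitzMmat F m).det) + (toeplitzBmat F m).det := by
  classical
  set r : Fin (m+1) := Fin.last m with hr
  have hrv : (r : ℕ) = m := Fin.val_last m
  have hA : (Matrix.of fun i j : Fin (m+1) => X ((i : ℤ) - (j : ℤ))
        : Matrix (Fin (m+1)) (Fin (m+1)) (MvPolynomial ℤ F))
      = (toeplitzBmat F m).updateRow r
        ((Pi.single (0 : Fin (m+1)) (X (m : ℤ)) : Fin (m+1) → MvPolynomial ℤ F)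
          + toeplitzBmat F m r) := by
    ext i j
    by_cases hi : i = r
    · subst hi
      rw [Matrix.updateRow_self]
      by_cases hj : j = 0
      · subst hj
        have h0 : ((0 : Fin (m+1)) : ℕ) = 0 := rfl
        simp only [Matrix.of_apply, Pi.add_apply, Pi.single_eq_same, toeplitzBmat, hrv, h0,
          and_true, if_pos rfl, add_zero]
        norm_num
      · have hj' : ¬ ((r : ℕ) = m ∧ (j : ℕ) = 0) := by
          intro h
          exact hj (Fin.ext (by simpa using h.2))
        simp only [Matrix.of_apply, Pi.add_apply, toeplitzBmat, if_neg hj',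
          Pi.single_eq_of_ne hj, zero_add]
    · rw [Matrix.updateRow_ne hi]
      have hi' : ¬ ((i : ℕ) = m ∧ (j : ℕ) = 0) := by
        intro h
        exact hi (Fin.ext (by simpa [hrv] using h.1))
      simp only [toeplitzBmat, Matrix.of_apply, if_neg hi']
  have hsplit : toeplitzGdet F (m+1)
      = ((toeplitzBmat F m).updateRow r (Pi.single (0 : Fin (m+1)) (X (m : ℤ)))).det
        + (toeplitzBmat F m).det := by
    rw [toeplitzGdet, hA, Matrix.det_updateRow_add, Matrix.updateRow_eq_self]
  have hsingle : (Pi.single (0 : Fin (m+1)) (X (m : ℤ)) : Fin (m+1) → MvPolynomial ℤ F)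
      = (X (m : ℤ) : MvPolynomial ℤ F) •
        (Pi.single (0 : Fin (m+1)) (1 : MvPolynomial ℤ F) : Fin (m+1) → MvPolynomial ℤ F) := by
    funext j
    by_cases hj : j = 0
    · subst hj; simp
    · simp [Pi.single_eq_of_ne hj]
  have hsmul : ((toeplitzBmat F m).updateRow r (Pi.single (0 : Fin (m+1)) (X (m : ℤ)))).det
      = X (m : ℤ) * ((toeplitzBmat F m).updateRow r (Pi.single (0 : Fin (m+1)) 1)).det := by
    rw [hsingle, Matrix.det_updateRow_smul]
  set E := (toeplitzBmat F m).updateRow r (Pi.single (0 : Fin (m+1)) 1) with hE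
  have hsub : E.submatrix r.succAbove (Fin.succAbove 0) = toeplitzMmat F m := by
    ext i j : 2
    have h1 : r.succAbove i = Fin.castSucc i := by rw [hr, Fin.succAbove_last]
    have h2 : (0 : Fin (m+1)).succAbove j = j.succ := by rw [Fin.succAbove_zero]
    rw [Matrix.submatrix_apply, h1, h2, hE,
      Matrix.updateRow_ne (Fin.castSucc_lt_last i).ne]
    have hc : ¬ (((Fin.castSucc i : Fin (m+1)) : ℕ) = m ∧ ((j.succ : Fin (m+1)) : ℕ) = 0) := by
      rw [Fin.coe_castSucc, Fin.val_succ]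
      have := i.isLt
      omega
    simp only [toeplitzBmat, Matrix.of_apply, if_neg hc, toeplitzMmat]
    have harith : ((((Fin.castSucc i) : Fin (m+1)) : ℕ) : ℤ)
          - ((((j.succ) : Fin (m+1)) : ℕ) : ℤ)
        = ((i : ℕ) : ℤ) - ((j : ℕ) : ℤ) - 1 := by
      rw [Fin.coe_castSucc, Fin.val_succ]
      push_cast
      ring
    rw [harith]
  have hdetE : E.det = (-1) ^ m * (toeplitzMmat F m).det := by
    rw [Matrix.det_succ_row E r]
    rw [Finset.sum_eq_single_of_mem (0 : Fin (m+1)) (Finset.mem_univ _)]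
    · have hE0 : E r (0 : Fin (m+1)) = 1 := by
        rw [hE, Matrix.updateRow_self]; simp
      rw [hE0, hsub]
      simp [hrv]
    · intro j _ hj
      have hEj : E r j = 0 := by
        rw [hE, Matrix.updateRow_self, Pi.single_eq_of_ne hj]
      rw [hEj]
      ring
  rw [hsplit, hsmul, hdetE]

/-- Main induction: the `ℤ`-indexed generic Toeplitz determinant is irreducible. -/
theorem toeplitz_gdet_irreducible (F : Type*) [Field F] (n : ℕ) (hn : 1 ≤ n) :
    Irreducible (toeplitzGdet F n) := by
  induction n, hn using Nat.le_induction with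
  | base =>
      have h1 : toeplitzGdet F 1 = X (0 : ℤ) := by
        rw [toeplitzGdet, Matrix.det_fin_one]
        norm_num
      rw [h1]
      apply toeplitz_irr_of_ringEquiv (toeplitzIsolate F 0).toRingEquiv
      have : (toeplitzIsolate F 0).toRingEquiv (X (0 : ℤ)) = Polynomial.X :=
        toeplitzIsolate_X_self 0
      rw [this]
      exact Polynomial.prime_X.irreducible
  | succ m hm ih =>
      have hMshirr : Irreducible ((toeplitzMmat F m).det) := by
        rw [← toeplitz_rename_shift_gdet]
        apply toeplitz_irr_of_rename (Equiv.subRight (1 : ℤ)).symm.injective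
        rw [rename_rename]
        simpa [Equiv.symm_comp_self] using ih
      have hMirr : Irreducible ((toeplitzMmatS F m).det) :=
        toeplitz_irr_of_rename Subtype.val_injective
          (by rw [toeplitz_rename_MmatS_det]; exact hMshirr)
      have hndvd : ¬ (toeplitzMmatS F m).det ∣ (toeplitzBmatS F m).det := by
        intro hdvd
        have h2 : (toeplitzMmat F m).det ∣ (toeplitzBmat F m).det := by
          rw [← toeplitz_rename_MmatS_det, ← toeplitz_rename_BmatS_det]
          exact map_dvd _ hdvd
        obtain ⟨q, hq⟩ := h2
        have hev := congrArg (eval (fun z : ℤ => if z = 0 then (1 : F) else 0)) hq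
        rw [toeplitz_eval_Bmat_det m hm, map_mul, toeplitz_eval_Mmat_det m hm,
          zero_mul] at hev
        exact one_ne_zero hev
      have himg : toeplitzIsolate F (m : ℤ) (toeplitzGdet F (m+1))
          = Polynomial.C (((-1) ^ m : MvPolynomial {z : ℤ // z ≠ (m : ℤ)} F)
              * (toeplitzMmatS F m).det) * Polynomial.X
            + Polynomial.C ((toeplitzBmatS F m).det) := by
        rw [toeplitz_gdet_decomp m hm, map_add, map_mul, toeplitzIsolate_X_self]
        have hm1 : ((-1 : MvPolynomial ℤ F) ^ m * (toeplitzMmat F m).det)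
            = rename Subtype.val
              (((-1) ^ m : MvPolynomial {z : ℤ // z ≠ (m : ℤ)} F) * (toeplitzMmatS F m).det) := by
          rw [map_mul, toeplitz_rename_MmatS_det]
          simp
        have hb1 : (toeplitzBmat F m).det
            = rename (Subtype.val : {z : ℤ // z ≠ (m : ℤ)} → ℤ) ((toeplitzBmatS F m).det) :=
          (toeplitz_rename_BmatS_det m).symm
        rw [hm1, hb1, toeplitzIsolate_rename, toeplitzIsolate_rename]
        ring
      apply toeplitz_irr_of_ringEquiv (toeplitzIsolate F (m : ℤ)).toRingEquiv
      have himg' : (toeplitzIsolate F (m : ℤ)).toRingEquiv (toeplitzGdet F (m+1))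
          = Polynomial.C (((-1) ^ m : MvPolynomial {z : ℤ // z ≠ (m : ℤ)} F)
              * (toeplitzMmatS F m).det) * Polynomial.X
            + Polynomial.C ((toeplitzBmatS F m).det) := himg
      rw [himg']
      apply toeplitz_irr_linear
      · have hu : IsUnit ((-1 : MvPolynomial {z : ℤ // z ≠ (m : ℤ)} F) ^ m) :=
          (isUnit_one.neg).pow m
        have hassoc : Associated ((toeplitzMmatS F m).det)
            (((-1) ^ m : MvPolynomial {z : ℤ // z ≠ (m : ℤ)} F) * (toeplitzMmatS F m).det) :=
          ⟨hu.unit, by rw [IsUnit.unit_spec]; ring⟩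
        exact hassoc.irreducible hMirr
      · intro hdvd
        apply hndvd
        have hstep : (toeplitzMmatS F m).det ∣
            ((-1) ^ m : MvPolynomial {z : ℤ // z ≠ (m : ℤ)} F) * (toeplitzMmatS F m).det :=
          Dvd.intro_left _ rfl
        exact hstep.trans hdvd

end ToeplitzAux

/-- The determinant of the `n×n` Toeplitz matrix of indeterminates, whose `(i,j)` entry is
the variable `x_{i-j}`; the `2n-1` variables `x_{1-n}, …, x_{n-1}` are encoded by
`Fin (2*n-1)`, with `x_z` corresponding to index `z + (n-1)`. -/
noncomputable def toeplitzDet (F : Type*) [Field F] (n : ℕ) :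
    MvPolynomial (Fin (2 * n - 1)) F :=
  Matrix.det (Matrix.of fun i j : Fin n =>
    MvPolynomial.X (⟨(i : ℕ) + (n - 1) - (j : ℕ), by
      have hi := i.isLt; have hj := j.isLt; omega⟩ : Fin (2 * n - 1)))

/-- The determinant of the Toeplitz matrix of indeterminates is irreducible
over any field. -/
theorem stmt_10 (F : Type*) [Field F] (n : ℕ) (hn : 1 ≤ n) :
    Irreducible (toeplitzDet F n) := by
  have hinj : Function.Injective (fun k : Fin (2 * n - 1) => (k : ℤ) - ((n : ℤ) - 1)) := by
    intro a b h
    simp only at h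
    apply Fin.ext
    omega
  apply toeplitz_irr_of_rename hinj
  have hrel : rename (fun k : Fin (2 * n - 1) => (k : ℤ) - ((n : ℤ) - 1)) (toeplitzDet F n)
      = toeplitzGdet F n := by
    rw [toeplitzDet, toeplitzGdet, AlgHom.map_det]
    congr 1
    apply Matrix.ext
    intro i j
    rw [AlgHom.mapMatrix_apply, Matrix.map_apply, Matrix.of_apply, Matrix.of_apply, rename_X]
    congr 1
    simp only
    have hi := i.isLt; have hj := j.isLt
    omega
  rw [hrel]
  exact toeplitz_gdet_irreducible F n hn
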